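/- Let φ: S¹ → S¹ be a non-constant non-decreasing degree one map with good lift φ̃, and let h̃₁, h̃₂ ∈ H̃ be such that the maps h̃₁∘φ̃ and φ̃∘h̃₂ project to the same map of S¹, so that there is n: ℝ → ℤ with h̃₁(φ̃(x)) = φ̃(h̃₂(x)) + n(x). Then n is constant. -/

import Mathlib

noncomputable section

/-- The circle `S¹ = ℝ/ℤ`. -/
abbrev Circle1 : Type := AddCircle (1 : ℝ)

/-- Membership in `H̃ = {h̃ ∈ Homeo⁺(ℝ) : h̃(x+1) = h̃(x)+1}`. -/
def InHtilde (f : ℝ → ℝ) : Prop :=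
  StrictMono f ∧ Function.Surjective f ∧ ∀ x : ℝ, f (x + 1) = f x + 1

/-- An orientation-preserving homeomorphism of the circle. -/
def IsOPH (f : Circle1 → Circle1) : Prop :=
  ∃ ft : ℝ → ℝ, (∀ x : ℝ, f (↑x) = ↑(ft x)) ∧ InHtilde ft

/-- A circle action of a group `Γ`: a homomorphism `Γ → Homeo⁺(S¹)`. -/
def IsCircleAction {Γ : Type*} [Group Γ] (ρ : Γ → Circle1 → Circle1) : Prop :=
  (∀ γ, IsOPH (ρ γ)) ∧ ρ 1 = id ∧ ∀ g h : Γ, ρ (g * h) = ρ g ∘ ρ h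

/-- A homomorphism `Γ → H̃`, given as a map into functions `ℝ → ℝ`. -/
def IsHtildeAction {Γ : Type*} [Group Γ] (ρt : Γ → ℝ → ℝ) : Prop :=
  (∀ γ, InHtilde (ρt γ)) ∧ ρt 1 = id ∧ ∀ g h : Γ, ρt (g * h) = ρt g ∘ ρt h

/-- `φt : ℝ → ℝ` is a good lift of `φ : S¹ → S¹`. -/
def GoodLift (φ : Circle1 → Circle1) (φt : ℝ → ℝ) : Prop :=
  (∀ x : ℝ, φ (↑x) = ↑(φt x)) ∧ Monotone φt ∧ ∀ x : ℝ, φt (x + 1) = φt x + 1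

/-- Let `φ` be a non-constant non-decreasing degree one map with good lift `φ̃` and
`h̃₁, h̃₂ ∈ H̃` such that `h̃₁ ∘ φ̃` and `φ̃ ∘ h̃₂` project to the same map of `S¹`, so
that `h̃₁(φ̃(x)) = φ̃(h̃₂(x)) + n(x)` for some `n : ℝ → ℤ`. Then `n` is constant. -/
theorem translation_discrepancy_constant (φ : Circle1 → Circle1) (φt : ℝ → ℝ)
    (hφ : GoodLift φ φt) (hnc : ∃ a b : Circle1, φ a ≠ φ b)
    (ht₁ ht₂ : ℝ → ℝ) (H₁ : InHtilde ht₁) (H₂ : InHtilde ht₂)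
    (n : ℝ → ℤ) (hn : ∀ x : ℝ, ht₁ (φt x) = φt (ht₂ x) + n x) :
    ∀ x y : ℝ, n x = n y := by
  obtain ⟨hφc, hφm, hφ1⟩ := hφ
  obtain ⟨h1m, h1s, h1p⟩ := H₁
  obtain ⟨h2m, h2s, h2p⟩ := H₂
  -- periodicity of φt for integer translations
  have hperZ : ∀ (k : ℤ) (t : ℝ), φt (t + k) = φt t + k := by
    intro k
    induction k using Int.induction_on with
    | zero => simp
    | succ i ih =>
        intro t
        have e : (t + ((i : ℤ) + 1 : ℤ) : ℝ) = (t + ((i : ℤ) : ℝ)) + 1 := by push_cast; ring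
        rw [e, hφ1, ih]; push_cast; ring
    | pred i ih =>
        intro t
        have h := hφ1 (t + ((-(i : ℤ) - 1 : ℤ) : ℝ))
        have e : (t + ((-(i : ℤ) - 1 : ℤ) : ℝ) + 1 : ℝ) = (t + ((-(i : ℤ) : ℤ) : ℝ)) := by
          push_cast; ring
        rw [e, ih] at h
        push_cast at h ⊢
        linarith
  have gmono : Monotone fun t => ht₁ (φt t) := fun s t h => h1m.monotone (hφm h)
  have fmono : Monotone fun t => φt (ht₂ t) := fun s t h => hφm (h2m.monotone h)
  have gper : ∀ t, ht₁ (φt (t + 1)) = ht₁ (φt t) + 1 := by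
    intro t; rw [hφ1, h1p]
  have fper : ∀ t, φt (ht₂ (t + 1)) = φt (ht₂ t) + 1 := by
    intro t; rw [h2p, hφ1]
  have nper : ∀ t, n (t + 1) = n t := by
    intro t
    have h1 := hn (t + 1)
    have h2 := hn t
    rw [gper, fper] at h1
    have : (n (t + 1) : ℝ) = n t := by linarith
    exact_mod_cast this
  have nperZ : ∀ (k : ℤ) (t : ℝ), n (t + k) = n t := by
    intro k
    induction k using Int.induction_on with
    | zero => simp
    | succ i ih =>
        intro t
        have e : (t + ((i : ℤ) + 1 : ℤ) : ℝ) = (t + ((i : ℤ) : ℝ)) + 1 := by push_cast; ring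
        rw [e, nper, ih]
    | pred i ih =>
        intro t
        have h : n (t + ((-(i : ℤ) - 1 : ℤ) : ℝ) + 1) = n (t + ((-(i : ℤ) - 1 : ℤ) : ℝ)) := nper _
        have e : (t + ((-(i : ℤ) - 1 : ℤ) : ℝ) + 1 : ℝ) = (t + ((-(i : ℤ) : ℤ) : ℝ)) := by
          push_cast; ring
        rw [e, ih] at h
        exact h.symm
  -- Key: no strict increase of n within one period
  have key : ∀ a b : ℝ, a ≤ b → b ≤ a + 1 → n a < n b → False := by
    intro a b hab hba hlt
    have hga := hn a
    have hgb := hn b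
    have hg1 : ht₁ (φt b) ≤ ht₁ (φt a) + 1 := by
      rw [← gper a]; exact gmono hba
    have hfab : φt (ht₂ a) ≤ φt (ht₂ b) := fmono hab
    have hnba : (1 : ℝ) ≤ (n b : ℝ) - (n a : ℝ) := by
      have h : (n a : ℤ) + 1 ≤ n b := hlt
      have h2 : ((n a : ℝ)) + 1 ≤ (n b : ℝ) := by exact_mod_cast h
      linarith
    have hfeq : φt (ht₂ b) = φt (ht₂ a) := by linarith
    have hneq : (n b : ℝ) = (n a : ℝ) + 1 := by linarith
    have hgb' : ht₁ (φt b) = ht₁ (φt a) + 1 := by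
      rw [hgb, hfeq, hneq, hga]; ring
    have hφb : φt b = φt a + 1 := by
      have : ht₁ (φt b) = ht₁ (φt a + 1) := by rw [h1p]; exact hgb'
      exact h1m.injective this
    -- every point of [a, a+1] has φt value in φt a + ℤ
    have step : ∀ t, a ≤ t → t ≤ a + 1 → ∃ k : ℤ, φt t = φt a + k := by
      intro t h1t h2t
      by_cases htb : t ≤ b
      · have hft : φt (ht₂ t) = φt (ht₂ a) := by
          have h1 : φt (ht₂ a) ≤ φt (ht₂ t) := fmono h1t
          have h2 : φt (ht₂ t) ≤ φt (ht₂ b) := fmono htb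
          linarith [hfeq]
        have hgt := hn t
        have hna_le : (n a : ℝ) ≤ (n t : ℝ) := by
          have := gmono h1t
          simp only at this
          rw [hga, hgt, hft] at this
          linarith
        have hnt_le : (n t : ℝ) ≤ (n a : ℝ) + 1 := by
          have := gmono htb
          simp only at this
          rw [hgt, hgb, hfeq, hft, hneq] at this
          linarith
        have hcase : n t = n a ∨ n t = n a + 1 := by
          have h1 : n a ≤ n t := by exact_mod_cast hna_le
          have h2 : n t ≤ n a + 1 := by exact_mod_cast hnt_le
          omega
        rcases hcase with hc | hc
        · refine ⟨0, ?_⟩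
          have : ht₁ (φt t) = ht₁ (φt a) := by
            rw [hgt, hga, hft, hc]
          have := h1m.injective this
          simp [this]
        · refine ⟨1, ?_⟩
          have : ht₁ (φt t) = ht₁ (φt b) := by
            rw [hgt, hgb, hft, hfeq, hc, hneq]; push_cast; ring
          have := h1m.injective this
          rw [this, hφb]; norm_num
      · push_neg at htb
        have hgt2 : ht₁ (φt t) = ht₁ (φt b) := by
          have h1 : ht₁ (φt b) ≤ ht₁ (φt t) := gmono htb.le
          have h2 : ht₁ (φt t) ≤ ht₁ (φt (a + 1)) := gmono h2t
          have h3 : ht₁ (φt (a + 1)) = ht₁ (φt b) := by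
            rw [gper a, hgb']
          linarith
        have := h1m.injective hgt2
        exact ⟨1, by rw [this, hφb]; norm_num⟩
    have allZ : ∀ u : ℝ, ∃ k : ℤ, φt u = φt a + k := by
      intro u
      set m : ℤ := ⌊u - a⌋ with hm
      have h1 : a ≤ u - m := by
        have := Int.floor_le (u - a)
        rw [← hm] at this
        linarith
      have h2 : u - m ≤ a + 1 := by
        have := Int.lt_floor_add_one (u - a)
        rw [← hm] at this
        linarith
      obtain ⟨k, hk⟩ := step (u - m) h1 h2
      refine ⟨k + m, ?_⟩
      have := hperZ m (u - m)
      have e : (u - m + m : ℝ) = u := by ring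
      rw [e] at this
      rw [this, hk]; push_cast; ring
    obtain ⟨p, q, hpq⟩ := hnc
    obtain ⟨u, rfl⟩ := QuotientAddGroup.mk_surjective p
    obtain ⟨v, rfl⟩ := QuotientAddGroup.mk_surjective q
    apply hpq
    rw [hφc u, hφc v]
    obtain ⟨k, hk⟩ := allZ u
    obtain ⟨l, hl⟩ := allZ v
    have : (↑(φt u) : Circle1) = ↑(φt v) := by
      rw [QuotientAddGroup.eq]
      refine AddSubgroup.mem_zmultiples_iff.2 ⟨l - k, ?_⟩
      rw [hk, hl]; simp; ring
    exact this
  -- conclude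
  intro x y
  by_contra hne
  set m : ℤ := ⌈x - y⌉ with hm
  have hy' : n (y + m) = n y := nperZ m y
  have h1 : x ≤ y + m := by
    have := Int.le_ceil (x - y)
    rw [← hm] at this
    linarith
  have h2 : y + m ≤ x + 1 := by
    have := Int.ceil_lt_add_one (x - y)
    rw [← hm] at this
    linarith
  rcases lt_trichotomy (n x) (n (y + m)) with h | h | h
  · exact key x (y + m) h1 h2 h
  · exact hne (h.trans hy')
  · have hx1 : n (x + 1) = n x := nper x
    exact key (y + m) (x + 1) h2 (by linarith) (by rw [hx1]; exact h)
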